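/- Let A be a unital C*-algebra with projections p₁,…,p_{d²} satisfying ∑ᵢ pᵢ = d·1 and pᵢ pⱼ pᵢ = λ pᵢ for all i ≠ j, where λ = 1/(d+1). Then for any tracial state τ on A, τ(pᵢ) = 1/d for all i. -/
import Mathlib


open scoped ComplexOrder

/-- If `p₁,…,p_{d²}` are projections in a unital C*-algebra with `∑ pᵢ = d·1` and
`pᵢpⱼpᵢ = (1/(d+1))pᵢ` for `i ≠ j`, then every tracial state satisfies `τ(pᵢ) = 1/d`. -/
theorem stmt1 {A : Type*} [CStarAlgebra A] (d : ℕ) (hd : 0 < d)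
    (p : Fin (d ^ 2) → A)
    (hsa : ∀ i, IsSelfAdjoint (p i)) (hid : ∀ i, p i * p i = p i)
    (hsum : ∑ i, p i = (d : A))
    (hrel : ∀ i j, i ≠ j → p i * p j * p i = ((d : ℂ) + 1)⁻¹ • p i)
    (τ : A →ₗ[ℂ] ℂ) (hτ1 : τ 1 = 1)
    (hτpos : ∀ a : A, 0 ≤ τ (star a * a))
    (hτtr : ∀ a b : A, τ (a * b) = τ (b * a)) :
    ∀ i, τ (p i) = 1 / d := by
  have hdC : (d : ℂ) ≠ 0 := Nat.cast_ne_zero.mpr hd.ne'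
  have hlam : ((d : ℂ) + 1)⁻¹ ≠ 0 := by
    apply inv_ne_zero
    intro h
    have : (d : ℂ) = -1 := by linear_combination h
    exact hdC (by
      have h2 : (0:ℂ) ≤ (d:ℂ) := by exact_mod_cast Nat.cast_nonneg d
      nlinarith [Complex.ext_iff.mp this])
  -- τ(pᵢ pⱼ pᵢ) = τ(pᵢ pⱼ) using the trace property and pᵢ² = pᵢ
  have hcyc : ∀ i j : Fin (d ^ 2), τ (p i * p j * p i) = τ (p i * p j) := by
    intro i j
    rw [hτtr (p i * p j) (p i), ← mul_assoc, hid]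
  -- all values τ(pᵢ) coincide
  have hkey : ∀ i j : Fin (d ^ 2), τ (p j) = τ (p i) := by
    intro i j
    rcases eq_or_ne j i with rfl | h
    · rfl
    · have h1 : ((d : ℂ) + 1)⁻¹ * τ (p i) = τ (p i * p j) := by
        have := hrel i j (Ne.symm h)
        calc ((d : ℂ) + 1)⁻¹ * τ (p i) = τ (((d : ℂ) + 1)⁻¹ • p i) := by
              rw [map_smul]; rfl
          _ = τ (p i * p j * p i) := by rw [this]
          _ = τ (p i * p j) := hcyc i j
      have h2 : ((d : ℂ) + 1)⁻¹ * τ (p j) = τ (p j * p i) := by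
        have := hrel j i h
        calc ((d : ℂ) + 1)⁻¹ * τ (p j) = τ (((d : ℂ) + 1)⁻¹ • p j) := by
              rw [map_smul]; rfl
          _ = τ (p j * p i * p j) := by rw [this]
          _ = τ (p j * p i) := hcyc j i
      have h3 : τ (p i * p j) = τ (p j * p i) := hτtr _ _
      have : ((d : ℂ) + 1)⁻¹ * τ (p i) = ((d : ℂ) + 1)⁻¹ * τ (p j) := by
        rw [h1, h2, h3]
      exact (mul_left_cancel₀ hlam this).symm
  intro i
  -- sum the trace over all projections
  have hsumτ : ∑ j, τ (p j) = (d : ℂ) := by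
    rw [← map_sum, hsum]
    have hA : (d : A) = d • (1 : A) := by rw [nsmul_eq_mul, mul_one]
    rw [hA, map_nsmul, hτ1]
    simp
  have hconst : ∑ j, τ (p j) = (d : ℂ) ^ 2 * τ (p i) := by
    calc ∑ j, τ (p j) = ∑ _j : Fin (d ^ 2), τ (p i) := by
          exact Finset.sum_congr rfl fun j _ => hkey i j
      _ = (d ^ 2 : ℕ) * τ (p i) := by
          rw [Finset.sum_const, Finset.card_univ, Fintype.card_fin, nsmul_eq_mul]
      _ = (d : ℂ) ^ 2 * τ (p i) := by push_cast; ring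
  have : (d : ℂ) ^ 2 * τ (p i) = (d : ℂ) := by rw [← hconst, hsumτ]
  have h4 : (d : ℂ) * ((d : ℂ) * τ (p i)) = (d : ℂ) * 1 := by linear_combination this
  have h5 := mul_left_cancel₀ hdC h4
  rw [eq_div_iff hdC]
  linear_combination h5
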